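/- Let Δ be a group containing ℤ^n as a normal subgroup of finite index such that the centralizer of ℤ^n in Δ equals ℤ^n (a finite effective extension of ℤ^n). Then there is an injective homomorphism from Δ into the group E(n) of Euclidean isometries of ℝ^n whose image is properly discontinuous and has compact orbit space; that is, Δ is isomorphic to a Euclidean crystallographic group. -/

import Mathlib

noncomputable section

/-- The orbit equivalence relation on `V` induced by a subgroup `G` of affine
transformations of `V`. -/
def affOrbitSetoid {V : Type*} [NormedAddCommGroup V] [NormedSpace ℝ V]
    (G : Subgroup (V ≃ᵃ[ℝ] V)) : Setoid V where
  r x y := ∃ g ∈ G, g x = y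
  iseqv := by
    refine ⟨fun x => ⟨1, G.one_mem, rfl⟩, ?_, ?_⟩
    · rintro x y ⟨g, hg, rfl⟩
      exact ⟨g⁻¹, G.inv_mem hg, g.symm_apply_apply x⟩
    · rintro x y z ⟨g, hg, rfl⟩ ⟨k, hk, rfl⟩
      exact ⟨k * g, G.mul_mem hk hg, rfl⟩

/-- A subgroup `G ≤ Aff(V)` is properly discontinuous if for every compact `K ⊆ V`
the set of `g ∈ G` with `gK ∩ K ≠ ∅` is finite. -/
def ProperlyDiscontinuousAff {V : Type*} [NormedAddCommGroup V] [NormedSpace ℝ V]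
    (G : Subgroup (V ≃ᵃ[ℝ] V)) : Prop :=
  ∀ K : Set V, IsCompact K → {g : V ≃ᵃ[ℝ] V | g ∈ G ∧ ((g '' K) ∩ K).Nonempty}.Finite

/-- A subgroup `G ≤ Aff(V)` is an affine crystallographic group if it acts properly
discontinuously on `V` and the orbit space `G \ V` is compact. -/
def IsCrystallographic {V : Type*} [NormedAddCommGroup V] [NormedSpace ℝ V]
    (G : Subgroup (V ≃ᵃ[ℝ] V)) : Prop :=
  ProperlyDiscontinuousAff G ∧ CompactSpace (Quotient (affOrbitSetoid G))

set_option linter.unusedSectionVars false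

namespace BZaux

open Finset

variable {n : ℕ} {Δ : Type*} [Group Δ] (Z : Subgroup Δ) [hN : Z.Normal]
variable (e : ↥Z ≃* Multiplicative (Fin n → ℤ))

/-! ### The lattice coordinates -/

def ph (z : Z) : Fin n → ℤ := Multiplicative.toAdd (e z)

def ps (v : Fin n → ℤ) : Z := e.symm (Multiplicative.ofAdd v)

lemma ph_ps (v : Fin n → ℤ) : ph Z e (ps Z e v) = v := by simp [ph, ps]

lemma ps_ph (z : Z) : ps Z e (ph Z e z) = z := by simp [ph, ps]

lemma ph_mul (z w : Z) : ph Z e (z * w) = ph Z e z + ph Z e w := by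
  simp [ph, _root_.map_mul]

lemma ph_one : ph Z e 1 = 0 := by simp [ph]

lemma ph_inj : Function.Injective (ph Z e) := by
  intro z w h
  have h2 : e z = e w := by
    have := congrArg (Multiplicative.ofAdd) h
    simpa [ph] using this
  exact e.injective h2

include e in
lemma Z_comm (z w : Z) : z * w = w * z :=
  e.injective (by rw [_root_.map_mul, _root_.map_mul, mul_comm])

/-! ### The conjugation action on coordinates -/

def aa (δ : Δ) (v : Fin n → ℤ) : Fin n → ℤ := ph Z e (MulAut.conjNormal δ (ps Z e v))

lemma aa_ph (δ : Δ) (z : Z) : aa Z e δ (ph Z e z) = ph Z e (MulAut.conjNormal δ z) := by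
  rw [aa, ps_ph]

lemma aa_add (δ : Δ) (u v : Fin n → ℤ) :
    aa Z e δ (u + v) = aa Z e δ u + aa Z e δ v := by
  have h1 : ps Z e (u + v) = ps Z e u * ps Z e v := by
    rw [ps, ps, ps, ofAdd_add, _root_.map_mul]
  rw [aa, h1, _root_.map_mul, ph_mul, aa, aa]

def aaH (δ : Δ) : (Fin n → ℤ) →+ (Fin n → ℤ) := AddMonoidHom.mk' (aa Z e δ) (aa_add Z e δ)

lemma aa_mul (δ₁ δ₂ : Δ) (v : Fin n → ℤ) :
    aa Z e (δ₁ * δ₂) v = aa Z e δ₁ (aa Z e δ₂ v) := by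
  rw [aa, aa, aa, ps_ph, _root_.map_mul, MulAut.mul_apply]

lemma aa_one (v : Fin n → ℤ) : aa Z e 1 v = v := by
  rw [aa, _root_.map_one]
  simpa using ph_ps Z e v

lemma aa_mem {z : Δ} (hz : z ∈ Z) (v : Fin n → ℤ) : aa Z e z v = v := by
  have h1 : MulAut.conjNormal z (ps Z e v) = ps Z e v := by
    apply Subtype.ext
    rw [MulAut.conjNormal_apply]
    have h2 := congrArg (Subtype.val) (Z_comm Z e ⟨z, hz⟩ (ps Z e v))
    simp only [Subgroup.coe_mul] at h2
    rw [h2]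
    group
  rw [aa, h1, ph_ps]

/-- Expansion of an additive hom on `ℤ^n` in the standard basis. -/
lemma addHom_apply_eq_sum {N : ℕ} {M : Type*} [AddCommGroup M]
    (f : (Fin N → ℤ) →+ M) (v : Fin N → ℤ) :
    f v = ∑ j, v j • f (Pi.single j 1) := by
  have hv : v = ∑ j, v j • Pi.single j (1 : ℤ) := by
    funext i
    rw [Finset.sum_apply]
    simp [Pi.single_apply]
  calc f v = f (∑ j, v j • Pi.single j (1 : ℤ)) := by rw [← hv]
  _ = ∑ j, v j • f (Pi.single j 1) := by
      rw [map_sum]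
      exact Finset.sum_congr rfl fun j _ => map_zsmul f _ _

lemma aa_apply_eq_sum (δ : Δ) (v : Fin n → ℤ) (i : Fin n) :
    aa Z e δ v i = ∑ j, v j * aa Z e δ (Pi.single j 1) i := by
  have h := congrFun (addHom_apply_eq_sum (aaH Z e δ) v) i
  simpa [aaH, smul_eq_mul] using h

/-! ### Integral matrices of the action -/

open Matrix

def MM (δ : Δ) : Matrix (Fin n) (Fin n) ℝ :=
  Matrix.of fun i j => ((aa Z e δ (Pi.single j 1)) i : ℝ)

/-- The embedding of the lattice into `ℝ^n`. -/
def iv (v : Fin n → ℤ) : Fin n → ℝ := fun i => (v i : ℝ)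

lemma iv_add (u v : Fin n → ℤ) : iv (u + v) = iv u + iv v := by
  funext i; simp [iv]

lemma iv_zero : iv (0 : Fin n → ℤ) = 0 := by funext i; simp [iv]

lemma iv_inj : Function.Injective (iv (n := n)) := by
  intro u v h
  funext i
  have := congrFun h i
  simpa [iv] using this

lemma MM_mulVec (δ : Δ) (v : Fin n → ℤ) : MM Z e δ *ᵥ iv v = iv (aa Z e δ v) := by
  funext i
  rw [mulVec, dotProduct]
  rw [show iv (aa Z e δ v) i = ((aa Z e δ v i : ℤ) : ℝ) from rfl,
    aa_apply_eq_sum Z e δ v i]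
  push_cast
  exact Finset.sum_congr rfl fun j _ => by simp [MM, iv, mul_comm]

lemma MM_mul (δ₁ δ₂ : Δ) : MM Z e (δ₁ * δ₂) = MM Z e δ₁ * MM Z e δ₂ := by
  ext i j
  rw [Matrix.mul_apply]
  show ((aa Z e (δ₁ * δ₂) (Pi.single j 1)) i : ℝ) = _
  rw [aa_mul, aa_apply_eq_sum Z e δ₁ (aa Z e δ₂ (Pi.single j 1)) i]
  push_cast
  exact Finset.sum_congr rfl fun k _ => by simp [MM, mul_comm]

lemma MM_one : MM Z e 1 = 1 := by
  ext i j
  show ((aa Z e 1 (Pi.single j 1)) i : ℝ) = _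
  rw [aa_one]
  simp [Pi.single_apply, Matrix.one_apply, eq_comm]

lemma MM_mem {z : Δ} (hz : z ∈ Z) : MM Z e z = 1 := by
  ext i j
  show ((aa Z e z (Pi.single j 1)) i : ℝ) = _
  rw [aa_mem Z e hz]
  simp [Pi.single_apply, Matrix.one_apply, eq_comm]

lemma MM_inv_mul (δ : Δ) : MM Z e δ⁻¹ * MM Z e δ = 1 := by
  rw [← MM_mul, inv_mul_cancel, MM_one]

lemma MM_mul_inv (δ : Δ) : MM Z e δ * MM Z e δ⁻¹ = 1 := by
  rw [← MM_mul, mul_inv_cancel, MM_one]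

/-! ### Sections of the quotient -/

def π (δ : Δ) : Δ ⧸ Z := QuotientGroup.mk δ

def sec (q : Δ ⧸ Z) : Δ := Quotient.out q

lemma π_sec (q : Δ ⧸ Z) : π Z (sec Z q) = q := QuotientGroup.out_eq' q

lemma π_mul (δ₁ δ₂ : Δ) : π Z (δ₁ * δ₂) = π Z δ₁ * π Z δ₂ := rfl

lemma π_one : π Z (1 : Δ) = 1 := rfl

lemma π_mem {z : Δ} (hz : z ∈ Z) : π Z z = 1 := (QuotientGroup.eq_one_iff z).2 hz

def zp (δ : Δ) : Z :=
  ⟨δ * (sec Z (π Z δ))⁻¹, by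
    rw [← QuotientGroup.eq_one_iff]
    show π Z _ = 1
    rw [π_mul]
    have h1 : π Z ((sec Z (π Z δ))⁻¹) = (π Z (sec Z (π Z δ)))⁻¹ := rfl
    rw [h1, π_sec, mul_inv_cancel]⟩

lemma zp_sec (δ : Δ) : (zp Z δ : Δ) * sec Z (π Z δ) = δ := by
  show δ * (sec Z (π Z δ))⁻¹ * sec Z (π Z δ) = δ
  group

lemma zp_z_mul (z : Z) (δ : Δ) : zp Z ((z : Δ) * δ) = z * zp Z δ := by
  apply Subtype.ext
  show ((z : Δ) * δ) * (sec Z (π Z ((z : Δ) * δ)))⁻¹ = (z : Δ) * (δ * (sec Z (π Z δ))⁻¹)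
  have h1 : π Z ((z : Δ) * δ) = π Z δ := by rw [π_mul, π_mem Z z.2, one_mul]
  rw [h1, mul_assoc]

lemma MM_coset (δ : Δ) : MM Z e δ = MM Z e (sec Z (π Z δ)) := by
  conv_lhs => rw [← zp_sec Z δ]
  rw [MM_mul, MM_mem Z e (zp Z δ).2, one_mul]

/-! ### The translational cocycle -/

variable [Fintype (Δ ⧸ Z)]

def FF (δ : Δ) : Fin n → ℝ := iv (ph Z e (zp Z δ))

def bb (δ : Δ) : Fin n → ℝ :=
  ((Fintype.card (Δ ⧸ Z) : ℝ))⁻¹ • ∑ q : Δ ⧸ Z, FF Z e (δ * sec Z q)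

lemma FF_z_mul (z : Z) (δ : Δ) : FF Z e ((z : Δ) * δ) = iv (ph Z e z) + FF Z e δ := by
  rw [FF, FF, zp_z_mul, ph_mul, iv_add]

lemma FF_sec (q : Δ ⧸ Z) : FF Z e (sec Z q) = 0 := by
  have h1 : zp Z (sec Z q) = 1 := by
    apply Subtype.ext
    show sec Z q * (sec Z (π Z (sec Z q)))⁻¹ = 1
    rw [π_sec, mul_inv_cancel]
  rw [FF, h1, ph_one, iv_zero]

lemma key_identity (δ₁ δ₂ : Δ) (q : Δ ⧸ Z) :
    FF Z e (δ₁ * δ₂ * sec Z q) =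
      MM Z e δ₁ *ᵥ FF Z e (δ₂ * sec Z q) + FF Z e (δ₁ * sec Z (π Z δ₂ * q)) := by
  set z' : Z := zp Z (δ₂ * sec Z q) with hz'
  have hq' : π Z (δ₂ * sec Z q) = π Z δ₂ * q := by rw [π_mul, π_sec]
  have h1 : δ₂ * sec Z q = (z' : Δ) * sec Z (π Z δ₂ * q) := by
    rw [← hq', zp_sec]
  have h2 : δ₁ * δ₂ * sec Z q
      = ((δ₁ * (z' : Δ) * δ₁⁻¹) : Δ) * (δ₁ * sec Z (π Z δ₂ * q)) := by
    rw [mul_assoc δ₁ δ₂, h1]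
    group
  have hw : (δ₁ * (z' : Δ) * δ₁⁻¹) ∈ Z := hN.conj_mem _ z'.2 δ₁
  have h3 : FF Z e (δ₁ * δ₂ * sec Z q)
      = iv (ph Z e ⟨δ₁ * (z' : Δ) * δ₁⁻¹, hw⟩) + FF Z e (δ₁ * sec Z (π Z δ₂ * q)) := by
    rw [h2]
    exact FF_z_mul Z e ⟨_, hw⟩ _
  have h4 : (⟨δ₁ * (z' : Δ) * δ₁⁻¹, hw⟩ : Z) = MulAut.conjNormal δ₁ z' := by
    apply Subtype.ext
    rw [MulAut.conjNormal_apply]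
  have h5 : iv (ph Z e ⟨δ₁ * (z' : Δ) * δ₁⁻¹, hw⟩) = MM Z e δ₁ *ᵥ FF Z e (δ₂ * sec Z q) := by
    rw [h4, ← aa_ph, FF, ← hz', MM_mulVec]
  rw [h3, h5]

lemma bb_cocycle (δ₁ δ₂ : Δ) :
    bb Z e (δ₁ * δ₂) = MM Z e δ₁ *ᵥ bb Z e δ₂ + bb Z e δ₁ := by
  have h1 : ∑ q : Δ ⧸ Z, FF Z e (δ₁ * δ₂ * sec Z q)
      = MM Z e δ₁ *ᵥ (∑ q : Δ ⧸ Z, FF Z e (δ₂ * sec Z q))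
        + ∑ q : Δ ⧸ Z, FF Z e (δ₁ * sec Z q) := by
    have h2 : ∀ q : Δ ⧸ Z, FF Z e (δ₁ * δ₂ * sec Z q)
        = MM Z e δ₁ *ᵥ FF Z e (δ₂ * sec Z q) + FF Z e (δ₁ * sec Z (π Z δ₂ * q)) :=
      key_identity Z e δ₁ δ₂
    rw [Finset.sum_congr rfl fun q _ => h2 q, Finset.sum_add_distrib]
    congr 1
    · conv_rhs => rw [← Matrix.mulVecLin_apply, map_sum]
      simp [Matrix.mulVecLin_apply]
    · exact Equiv.sum_comp (Equiv.mulLeft (π Z δ₂)) (fun q => FF Z e (δ₁ * sec Z q))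
  rw [bb, bb, bb, h1, smul_add, Matrix.mulVec_smul]

lemma card_pos : 0 < (Fintype.card (Δ ⧸ Z) : ℝ) := by
  have : 0 < Fintype.card (Δ ⧸ Z) := Fintype.card_pos_iff.2 ⟨(1 : Δ ⧸ Z)⟩
  exact_mod_cast this

lemma bb_mem (z : Z) : bb Z e (z : Δ) = iv (ph Z e z) := by
  have h1 : ∀ q : Δ ⧸ Z, FF Z e ((z : Δ) * sec Z q) = iv (ph Z e z) := by
    intro q
    rw [FF_z_mul, FF_sec, add_zero]
  rw [bb, Finset.sum_congr rfl fun q _ => h1 q, Finset.sum_const, Finset.card_univ,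
    ← Nat.cast_smul_eq_nsmul ℝ, smul_smul, inv_mul_cancel₀ (card_pos Z).ne', one_smul]

lemma bb_one : bb Z e (1 : Δ) = 0 := by
  have h1 : ∀ q : Δ ⧸ Z, FF Z e ((1 : Δ) * sec Z q) = 0 := by
    intro q
    rw [one_mul, FF_sec]
  rw [bb, Finset.sum_congr rfl fun q _ => h1 q, Finset.sum_const, smul_zero, smul_zero]

/-! ### The invariant Gram matrix and its square root -/

def GG : Matrix (Fin n) (Fin n) ℝ :=
  ∑ q : Δ ⧸ Z, (MM Z e (sec Z q))ᵀ * MM Z e (sec Z q)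

lemma dot_mulVec_eq (M : Matrix (Fin n) (Fin n) ℝ) (x y : Fin n → ℝ) :
    (M *ᵥ x) ⬝ᵥ y = x ⬝ᵥ (Mᵀ *ᵥ y) := by
  rw [Matrix.dotProduct_mulVec, Matrix.vecMul_transpose]

lemma dot_self_nonneg (x : Fin n → ℝ) : 0 ≤ x ⬝ᵥ x :=
  Finset.sum_nonneg fun i _ => mul_self_nonneg _

lemma dot_self_pos {x : Fin n → ℝ} (hx : x ≠ 0) : 0 < x ⬝ᵥ x := by
  obtain ⟨i, hi⟩ := Function.ne_iff.1 hx
  refine Finset.sum_pos' (fun j _ => mul_self_nonneg _) ⟨i, Finset.mem_univ i, ?_⟩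
  exact mul_self_pos.2 hi

lemma sum_mulVec' {ι : Type*} (s : Finset ι) (f : ι → Matrix (Fin n) (Fin n) ℝ)
    (x : Fin n → ℝ) : (∑ i ∈ s, f i) *ᵥ x = ∑ i ∈ s, f i *ᵥ x := by
  funext j
  simp only [Matrix.mulVec, dotProduct, Finset.sum_apply, Finset.sum_mul,
    Matrix.sum_apply]
  rw [Finset.sum_comm]

lemma dot_sum' {ι : Type*} (s : Finset ι) (x : Fin n → ℝ) (v : ι → (Fin n → ℝ)) :
    x ⬝ᵥ (∑ i ∈ s, v i) = ∑ i ∈ s, x ⬝ᵥ v i := by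
  simp only [dotProduct, Finset.sum_apply, Finset.mul_sum]
  rw [Finset.sum_comm]

lemma MM_sec_one : MM Z e (sec Z (1 : Δ ⧸ Z)) = 1 := by
  have h := (MM_coset Z e (1 : Δ)).symm
  rw [π_one] at h
  rw [h, MM_one]

lemma GG_posDef : (GG Z e).PosDef := by
  refine Matrix.PosDef.of_dotProduct_mulVec_pos ?_ ?_
  · show (GG Z e)ᴴ = GG Z e
    rw [GG]
    rw [Matrix.conjTranspose_sum]
    refine Finset.sum_congr rfl fun q _ => ?_
    rw [Matrix.conjTranspose_eq_transpose_of_trivial, Matrix.transpose_mul,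
      Matrix.transpose_transpose]
  · intro x hx
    have hterm : ∀ q : Δ ⧸ Z,
        x ⬝ᵥ (((MM Z e (sec Z q))ᵀ * MM Z e (sec Z q)) *ᵥ x)
          = (MM Z e (sec Z q) *ᵥ x) ⬝ᵥ (MM Z e (sec Z q) *ᵥ x) := by
      intro q
      rw [← Matrix.mulVec_mulVec, ← dot_mulVec_eq]
    have hG : x ⬝ᵥ (GG Z e *ᵥ x)
        = ∑ q : Δ ⧸ Z, (MM Z e (sec Z q) *ᵥ x) ⬝ᵥ (MM Z e (sec Z q) *ᵥ x) := by
      rw [GG, sum_mulVec', dot_sum']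
      exact Finset.sum_congr rfl fun q _ => hterm q
    have hone : (MM Z e (sec Z (1 : Δ ⧸ Z)) *ᵥ x) ⬝ᵥ (MM Z e (sec Z (1 : Δ ⧸ Z)) *ᵥ x)
        = x ⬝ᵥ x := by rw [MM_sec_one, Matrix.one_mulVec]
    have hle : x ⬝ᵥ x ≤ x ⬝ᵥ (GG Z e *ᵥ x) := by
      rw [hG, ← hone]
      exact Finset.single_le_sum
        (f := fun q => (MM Z e (sec Z q) *ᵥ x) ⬝ᵥ (MM Z e (sec Z q) *ᵥ x))
        (fun q _ => dot_self_nonneg _) (Finset.mem_univ _)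
    have : (0:ℝ) < x ⬝ᵥ x := dot_self_pos hx
    have hst : star x = x := by funext i; simp
    show 0 < star x ⬝ᵥ (GG Z e *ᵥ x)
    rw [hst]
    linarith

lemma GG_invariant (δ : Δ) : (MM Z e δ)ᵀ * GG Z e * MM Z e δ = GG Z e := by
  have h1 : (MM Z e δ)ᵀ * GG Z e * MM Z e δ
      = ∑ q : Δ ⧸ Z, (MM Z e (sec Z q * δ))ᵀ * MM Z e (sec Z q * δ) := by
    rw [GG, Finset.mul_sum, Finset.sum_mul]
    refine Finset.sum_congr rfl fun q _ => ?_
    rw [MM_mul, Matrix.transpose_mul]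
    noncomm_ring
  have h2 : ∀ q : Δ ⧸ Z, MM Z e (sec Z q * δ) = MM Z e (sec Z (q * π Z δ)) := by
    intro q
    rw [MM_coset Z e (sec Z q * δ), π_mul, π_sec]
  rw [h1, Finset.sum_congr rfl fun q _ => by rw [h2 q], GG]
  exact Equiv.sum_comp (Equiv.mulRight (π Z δ))
    (fun q => (MM Z e (sec Z q))ᵀ * MM Z e (sec Z q))

/-! ### Square root of the Gram matrix -/

open scoped MatrixOrder in
def PP : Matrix (Fin n) (Fin n) ℝ := CFC.sqrt (GG Z e)

open scoped MatrixOrder in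
lemma PP_mul_PP : PP Z e * PP Z e = GG Z e :=
  CFC.sqrt_mul_sqrt_self _ (GG_posDef Z e).posSemidef.nonneg

open scoped MatrixOrder in
lemma PP_transpose : (PP Z e)ᵀ = PP Z e := by
  have h := (CFC.sqrt_nonneg (GG Z e)).posSemidef.isHermitian
  rw [Matrix.IsHermitian, Matrix.conjTranspose_eq_transpose_of_trivial] at h
  exact h

lemma PP_det_ne : (PP Z e).det ≠ 0 := by
  intro h
  have h2 : (GG Z e).det = 0 := by
    rw [← PP_mul_PP, Matrix.det_mul, h, mul_zero]
  exact (GG_posDef Z e).det_pos.ne' h2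

lemma PP_isUnit_det : IsUnit (PP Z e).det := isUnit_iff_ne_zero.2 (PP_det_ne Z e)

lemma PP_mul_inv : PP Z e * (PP Z e)⁻¹ = 1 := Matrix.mul_nonsing_inv _ (PP_isUnit_det Z e)

lemma PP_inv_mul : (PP Z e)⁻¹ * PP Z e = 1 := Matrix.nonsing_inv_mul _ (PP_isUnit_det Z e)

lemma PP_inv_transpose : ((PP Z e)⁻¹)ᵀ = (PP Z e)⁻¹ := by
  rw [Matrix.transpose_nonsing_inv, PP_transpose]

attribute [irreducible] PP

/-! ### The orthogonal linear parts and the final translation parts -/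

def NN (δ : Δ) : Matrix (Fin n) (Fin n) ℝ := PP Z e * MM Z e δ * (PP Z e)⁻¹

def cc (δ : Δ) : Fin n → ℝ := PP Z e *ᵥ bb Z e δ

lemma NN_mul (δ₁ δ₂ : Δ) : NN Z e (δ₁ * δ₂) = NN Z e δ₁ * NN Z e δ₂ := by
  rw [NN, NN, NN, MM_mul]
  calc PP Z e * (MM Z e δ₁ * MM Z e δ₂) * (PP Z e)⁻¹
      = PP Z e * MM Z e δ₁ * ((PP Z e)⁻¹ * PP Z e) * MM Z e δ₂ * (PP Z e)⁻¹ := by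
        rw [PP_inv_mul]; noncomm_ring
  _ = _ := by noncomm_ring

lemma NN_one : NN Z e (1 : Δ) = 1 := by
  rw [NN, MM_one, mul_one, PP_mul_inv]

lemma NN_mem {z : Δ} (hz : z ∈ Z) : NN Z e z = 1 := by
  rw [NN, MM_mem Z e hz, mul_one, PP_mul_inv]

lemma NN_orth (δ : Δ) : (NN Z e δ)ᵀ * NN Z e δ = 1 := by
  rw [NN, Matrix.transpose_mul, Matrix.transpose_mul, PP_inv_transpose, PP_transpose]
  calc (PP Z e)⁻¹ * ((MM Z e δ)ᵀ * PP Z e) * (PP Z e * MM Z e δ * (PP Z e)⁻¹)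
      = (PP Z e)⁻¹ * ((MM Z e δ)ᵀ * (PP Z e * PP Z e) * MM Z e δ) * (PP Z e)⁻¹ := by
        noncomm_ring
  _ = (PP Z e)⁻¹ * GG Z e * (PP Z e)⁻¹ := by rw [PP_mul_PP, GG_invariant]
  _ = ((PP Z e)⁻¹ * PP Z e) * (PP Z e * (PP Z e)⁻¹) := by rw [← PP_mul_PP]; noncomm_ring
  _ = 1 := by rw [PP_inv_mul, PP_mul_inv, one_mul]

lemma NN_dot (δ : Δ) (x : Fin n → ℝ) :
    (NN Z e δ *ᵥ x) ⬝ᵥ (NN Z e δ *ᵥ x) = x ⬝ᵥ x := by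
  rw [dot_mulVec_eq, Matrix.mulVec_mulVec, NN_orth, Matrix.one_mulVec]

lemma NN_PP_mulVec (δ : Δ) (x : Fin n → ℝ) :
    NN Z e δ *ᵥ (PP Z e *ᵥ x) = PP Z e *ᵥ (MM Z e δ *ᵥ x) := by
  rw [Matrix.mulVec_mulVec, Matrix.mulVec_mulVec, NN]
  have h : PP Z e * MM Z e δ * (PP Z e)⁻¹ * PP Z e = PP Z e * MM Z e δ := by
    rw [mul_assoc, PP_inv_mul, mul_one]
  rw [h]

lemma cc_cocycle (δ₁ δ₂ : Δ) :
    cc Z e (δ₁ * δ₂) = NN Z e δ₁ *ᵥ cc Z e δ₂ + cc Z e δ₁ := by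
  rw [cc, cc, cc, bb_cocycle, Matrix.mulVec_add, NN_PP_mulVec]

lemma cc_one : cc Z e (1 : Δ) = 0 := by rw [cc, bb_one, Matrix.mulVec_zero]

lemma cc_mem (z : Z) : cc Z e (z : Δ) = PP Z e *ᵥ iv (ph Z e z) := by
  rw [cc, bb_mem]

/-! ### The representation by affine isometries of Euclidean space -/

abbrev Euc (n : ℕ) := EuclideanSpace ℝ (Fin n)

/-- The identity map `ℝ^n → E(n)`, used to pick up the Euclidean norm. -/
def toE {n : ℕ} (x : Fin n → ℝ) : Euc n := WithLp.toLp 2 x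

/-- Matrix multiplication as a linear map on Euclidean space. -/
def linE (M : Matrix (Fin n) (Fin n) ℝ) : Euc n →ₗ[ℝ] Euc n where
  toFun x := WithLp.toLp 2 (M *ᵥ x : Fin n → ℝ)
  map_add' x y := congrArg (WithLp.toLp 2) (Matrix.mulVec_add M x y)
  map_smul' r x := congrArg (WithLp.toLp 2) (Matrix.mulVec_smul M r x)

lemma linE_apply (M : Matrix (Fin n) (Fin n) ℝ) (x : Euc n) :
    linE M x = (M *ᵥ x : Fin n → ℝ) := rfl

/-- The linear part of the representation as a linear equivalence. -/
def linEq (δ : Δ) : Euc n ≃ₗ[ℝ] Euc n :=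
  LinearEquiv.ofLinear (linE (NN Z e δ)) (linE (NN Z e δ⁻¹))
    (by
      apply LinearMap.ext
      intro x
      apply WithLp.ofLp_injective 2
      show (NN Z e δ *ᵥ (NN Z e δ⁻¹ *ᵥ x) : Fin n → ℝ) = x
      rw [Matrix.mulVec_mulVec, ← NN_mul, mul_inv_cancel, NN_one, Matrix.one_mulVec])
    (by
      apply LinearMap.ext
      intro x
      apply WithLp.ofLp_injective 2
      show (NN Z e δ⁻¹ *ᵥ (NN Z e δ *ᵥ x) : Fin n → ℝ) = x
      rw [Matrix.mulVec_mulVec, ← NN_mul, inv_mul_cancel, NN_one, Matrix.one_mulVec])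

/-- The crystallographic representation: `δ` acts by `x ↦ c δ + N δ x`. -/
def rAff (δ : Δ) : Euc n ≃ᵃ[ℝ] Euc n :=
  (linEq Z e δ).toAffineEquiv.trans (AffineEquiv.constVAdd ℝ (Euc n) (toE (cc Z e δ)))

lemma rAff_apply (δ : Δ) (x : Euc n) :
    rAff Z e δ x = toE (cc Z e δ + NN Z e δ *ᵥ x) := rfl

lemma rAff_mul (δ₁ δ₂ : Δ) : rAff Z e (δ₁ * δ₂) = rAff Z e δ₁ * rAff Z e δ₂ := by
  apply AffineEquiv.ext
  intro x
  rw [AffineEquiv.coe_mul, Function.comp_apply, rAff_apply, rAff_apply, rAff_apply]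
  apply WithLp.ofLp_injective 2
  show (cc Z e (δ₁ * δ₂) + NN Z e (δ₁ * δ₂) *ᵥ x : Fin n → ℝ)
      = cc Z e δ₁ + NN Z e δ₁ *ᵥ (cc Z e δ₂ + NN Z e δ₂ *ᵥ x)
  rw [cc_cocycle, Matrix.mulVec_add, NN_mul, ← Matrix.mulVec_mulVec]
  abel

/-- The representation as a monoid hom. -/
def rho : Δ →* (Euc n ≃ᵃ[ℝ] Euc n) := MonoidHom.mk' (rAff Z e) (rAff_mul Z e)

lemma rho_apply (δ : Δ) (x : Euc n) :
    rho Z e δ x = toE (cc Z e δ + NN Z e δ *ᵥ x) := rfl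

/-! ### Norm lemmas -/

lemma norm_sq_eq_dot (x : Euc n) : ‖x‖ ^ 2 = (x : Fin n → ℝ) ⬝ᵥ x := by
  rw [EuclideanSpace.norm_eq, Real.sq_sqrt (Finset.sum_nonneg fun i _ => sq_nonneg _)]
  exact Finset.sum_congr rfl fun i _ => by
    rw [Real.norm_eq_abs, sq_abs]; exact sq (x i) ▸ (sq (x i)).symm ▸ rfl

lemma norm_eq_sqrt_dot (x : Euc n) : ‖x‖ = Real.sqrt ((x : Fin n → ℝ) ⬝ᵥ x) := by
  rw [← norm_sq_eq_dot, Real.sqrt_sq (norm_nonneg x)]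

lemma norm_mulVec_NN (δ : Δ) (x : Euc n) :
    ‖toE (NN Z e δ *ᵥ x)‖ = ‖x‖ := by
  rw [norm_eq_sqrt_dot (toE (NN Z e δ *ᵥ x)), norm_eq_sqrt_dot x]
  show Real.sqrt ((NN Z e δ *ᵥ x) ⬝ᵥ (NN Z e δ *ᵥ x)) = _
  rw [NN_dot]

lemma coord_le_norm (x : Euc n) (i : Fin n) : |x i| ≤ ‖x‖ := by
  rw [EuclideanSpace.norm_eq]
  have h1 : ‖x i‖ ^ 2 ≤ ∑ j, ‖x j‖ ^ 2 :=
    Finset.single_le_sum (f := fun j => ‖x j‖ ^ 2) (fun j _ => sq_nonneg _)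
      (Finset.mem_univ i)
  calc |x i| = Real.sqrt (‖x i‖ ^ 2) := by
        rw [Real.sqrt_sq_eq_abs, Real.norm_eq_abs, abs_abs]
  _ ≤ _ := Real.sqrt_le_sqrt h1

/-! ### Isometry -/

lemma rho_isometry (δ : Δ) : Isometry (rho Z e δ) := by
  apply Isometry.of_dist_eq
  intro x y
  rw [rho_apply, rho_apply, dist_eq_norm, dist_eq_norm]
  have h : toE (cc Z e δ + NN Z e δ *ᵥ x) - toE (cc Z e δ + NN Z e δ *ᵥ y)
      = toE (NN Z e δ *ᵥ ((x - y : Euc n) : Fin n → ℝ)) := by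
    apply WithLp.ofLp_injective 2
    show (cc Z e δ + NN Z e δ *ᵥ x) - (cc Z e δ + NN Z e δ *ᵥ y)
        = NN Z e δ *ᵥ (x - y : Fin n → ℝ)
    rw [Matrix.mulVec_sub]
    abel
  rw [h, norm_mulVec_NN]

/-! ### Injectivity -/

lemma rho_injective (hc : Subgroup.centralizer (Z : Set Δ) = Z) :
    Function.Injective (rho Z e) := by
  rw [injective_iff_map_eq_one]
  intro δ hδ
  have happ : ∀ x : Euc n, toE (cc Z e δ + NN Z e δ *ᵥ x) = x := by
    intro x
    rw [← rho_apply, hδ]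
    rfl
  have hcc : cc Z e δ = 0 := by
    have h1 := happ (toE 0)
    have h2 : cc Z e δ + NN Z e δ *ᵥ (0 : Fin n → ℝ) = 0 := congrArg WithLp.ofLp h1
    rwa [Matrix.mulVec_zero, add_zero] at h2
  have hNNv : ∀ x : Fin n → ℝ, NN Z e δ *ᵥ x = x := by
    intro x
    have h1 := happ (toE x)
    have h2 : cc Z e δ + NN Z e δ *ᵥ x = x := congrArg WithLp.ofLp h1
    rwa [hcc, zero_add] at h2
  have hNN : NN Z e δ = 1 := by
    ext i j
    have h1 := congrFun (hNNv (Pi.single j 1)) i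
    rw [Matrix.mulVec_single] at h1
    simpa [Matrix.one_apply, Pi.single_apply] using h1
  have hMM : MM Z e δ = 1 := by
    have h1 : (PP Z e)⁻¹ * NN Z e δ * PP Z e = MM Z e δ := by
      rw [NN]
      calc (PP Z e)⁻¹ * (PP Z e * MM Z e δ * (PP Z e)⁻¹) * PP Z e
          = ((PP Z e)⁻¹ * PP Z e) * MM Z e δ * ((PP Z e)⁻¹ * PP Z e) := by noncomm_ring
      _ = MM Z e δ := by rw [PP_inv_mul, one_mul, mul_one]
    rw [← h1, hNN, mul_one, PP_inv_mul]
  have haa : ∀ v : Fin n → ℤ, aa Z e δ v = v := by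
    intro v
    apply iv_inj
    rw [← MM_mulVec, hMM, Matrix.one_mulVec]
  have hδZ : δ ∈ Z := by
    rw [← hc, Subgroup.mem_centralizer_iff]
    intro g hg
    have h1 : aa Z e δ (ph Z e ⟨g, hg⟩) = ph Z e ⟨g, hg⟩ := haa _
    rw [aa_ph] at h1
    have h2 : MulAut.conjNormal δ (⟨g, hg⟩ : Z) = ⟨g, hg⟩ := ph_inj Z e h1
    have h3 : δ * g * δ⁻¹ = g := by
      have := congrArg Subtype.val h2
      rwa [MulAut.conjNormal_apply] at this
    calc g * δ = (δ * g * δ⁻¹) * δ := by rw [h3]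
    _ = δ * g := by group
  have h4 : PP Z e *ᵥ iv (ph Z e ⟨δ, hδZ⟩) = 0 := by
    rw [← cc_mem]
    exact hcc
  have h5 : iv (ph Z e ⟨δ, hδZ⟩) = 0 := by
    calc iv (ph Z e ⟨δ, hδZ⟩)
        = ((PP Z e)⁻¹ * PP Z e) *ᵥ iv (ph Z e ⟨δ, hδZ⟩) := by
          rw [PP_inv_mul, Matrix.one_mulVec]
    _ = (PP Z e)⁻¹ *ᵥ (PP Z e *ᵥ iv (ph Z e ⟨δ, hδZ⟩)) := by rw [Matrix.mulVec_mulVec]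
    _ = 0 := by rw [h4, Matrix.mulVec_zero]
  have h6 : ph Z e ⟨δ, hδZ⟩ = 0 := by
    apply iv_inj
    rw [h5, iv_zero]
  have h7 : (⟨δ, hδZ⟩ : Z) = 1 := by
    apply ph_inj Z e
    rw [h6, ph_one]
  exact congrArg Subtype.val h7

/-! ### Finiteness lemmas for proper discontinuity -/

lemma mulVec_bound (M : Matrix (Fin n) (Fin n) ℝ) :
    ∃ C : ℝ, 0 ≤ C ∧ ∀ x : Euc n, ‖toE (M *ᵥ x)‖ ≤ C * ‖x‖ := by
  let L := LinearMap.toContinuousLinearMap (linE M)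
  exact ⟨‖L‖, norm_nonneg L, fun x => L.le_opNorm x⟩

lemma lattice_finite (r : ℝ) :
    {v : Fin n → ℤ | ‖toE (PP Z e *ᵥ iv v)‖ ≤ r}.Finite := by
  obtain ⟨C, hC0, hC⟩ := mulVec_bound (n := n) (PP Z e)⁻¹
  apply Set.Finite.subset
    (Set.Finite.pi (fun i : Fin n => Set.finite_Icc (-⌈C * r⌉) ⌈C * r⌉))
  intro v hv
  have h1 : iv v = (PP Z e)⁻¹ *ᵥ (PP Z e *ᵥ iv v) := by
    rw [Matrix.mulVec_mulVec, PP_inv_mul, Matrix.one_mulVec]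
  have h2 : ‖toE (iv v)‖ ≤ C * r := by
    calc ‖toE (iv v)‖ = ‖toE ((PP Z e)⁻¹ *ᵥ (PP Z e *ᵥ iv v))‖ := by rw [← h1]
    _ ≤ C * ‖toE (PP Z e *ᵥ iv v)‖ := hC (toE (PP Z e *ᵥ iv v))
    _ ≤ C * r := mul_le_mul_of_nonneg_left hv hC0
  intro i _
  have h3 : |(v i : ℝ)| ≤ C * r := by
    have := coord_le_norm (toE (iv v)) i
    exact le_trans this h2
  have h4 : |v i| ≤ ⌈C * r⌉ := by
    have h6 : |(v i : ℝ)| ≤ (⌈C * r⌉ : ℝ) := le_trans h3 (Int.le_ceil _)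
    exact_mod_cast h6
  simp only [Set.mem_Icc]
  exact abs_le.1 h4

lemma cc_ball_finite (r : ℝ) : {δ : Δ | ‖toE (cc Z e δ)‖ ≤ r}.Finite := by
  set r₂ : ℝ := ∑ q : Δ ⧸ Z, ‖toE (cc Z e (sec Z q))‖ with hr₂
  have hkey : ∀ δ : Δ, ‖toE (cc Z e δ)‖ ≤ r →
      ‖toE (PP Z e *ᵥ iv (ph Z e (zp Z δ)))‖ ≤ r + r₂ := by
    intro δ hδ
    have hd : ((zp Z δ : Δ)) * sec Z (π Z δ) = δ := zp_sec Z δ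
    have h1 : cc Z e δ = NN Z e (zp Z δ : Δ) *ᵥ cc Z e (sec Z (π Z δ))
        + cc Z e ((zp Z δ : Δ)) := by
      conv_lhs => rw [← hd]
      exact cc_cocycle Z e _ _
    have h2 : cc Z e δ = cc Z e (sec Z (π Z δ)) + PP Z e *ᵥ iv (ph Z e (zp Z δ)) := by
      rw [h1, NN_mem Z e (zp Z δ).2, Matrix.one_mulVec, cc_mem]
    have h3 : toE (PP Z e *ᵥ iv (ph Z e (zp Z δ)))
        = toE (cc Z e δ) - toE (cc Z e (sec Z (π Z δ))) := by
      apply WithLp.ofLp_injective 2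
      show PP Z e *ᵥ iv (ph Z e (zp Z δ)) = cc Z e δ - cc Z e (sec Z (π Z δ))
      rw [h2]
      abel
    rw [h3]
    have h4 : ‖toE (cc Z e (sec Z (π Z δ)))‖ ≤ r₂ :=
      Finset.single_le_sum (f := fun q => ‖toE (cc Z e (sec Z q))‖)
        (fun q _ => norm_nonneg _) (Finset.mem_univ (π Z δ))
    calc ‖toE (cc Z e δ) - toE (cc Z e (sec Z (π Z δ)))‖
        ≤ ‖toE (cc Z e δ)‖ + ‖toE (cc Z e (sec Z (π Z δ)))‖ := norm_sub_le _ _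
    _ ≤ r + r₂ := add_le_add hδ h4
  set f : Δ → (Fin n → ℤ) × (Δ ⧸ Z) := fun δ => (ph Z e (zp Z δ), π Z δ) with hf
  have hinj : Function.Injective f := by
    intro δ δ' h
    have h1 : ph Z e (zp Z δ) = ph Z e (zp Z δ') := congrArg Prod.fst h
    have h2 : π Z δ = π Z δ' := congrArg Prod.snd h
    have h3 : zp Z δ = zp Z δ' := ph_inj Z e h1
    calc δ = (zp Z δ : Δ) * sec Z (π Z δ) := (zp_sec Z δ).symm
    _ = (zp Z δ' : Δ) * sec Z (π Z δ') := by rw [h2, h3]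
    _ = δ' := zp_sec Z δ'
  apply Set.Finite.of_finite_image _ (hinj.injOn)
  apply Set.Finite.subset
    (Set.Finite.prod (lattice_finite Z e (r + r₂)) (Set.finite_univ (α := Δ ⧸ Z)))
  rintro p ⟨δ, hδ, rfl⟩
  exact ⟨hkey δ hδ, Set.mem_univ _⟩


/-! ### Main assembly -/

include e in
lemma main (hc : Subgroup.centralizer (Z : Set Δ) = Z) :
    ∃ ρ : Δ →* (EuclideanSpace ℝ (Fin n) ≃ᵃ[ℝ] EuclideanSpace ℝ (Fin n)),
      Function.Injective ρ ∧ (∀ δ : Δ, Isometry (ρ δ)) ∧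
        IsCrystallographic ρ.range := by
  refine ⟨rho Z e, rho_injective Z e hc, rho_isometry Z e, ?_, ?_⟩
  · -- properly discontinuous
    intro K hK
    obtain ⟨R, hR⟩ : ∃ R : ℝ, ∀ x ∈ K, ‖x‖ ≤ R := by
      obtain ⟨R, hR⟩ := hK.isBounded.subset_closedBall 0
      refine ⟨R, fun x hx => ?_⟩
      have h1 := hR hx
      rwa [Metric.mem_closedBall, dist_zero_right] at h1
    have hsub : {g : EuclideanSpace ℝ (Fin n) ≃ᵃ[ℝ] EuclideanSpace ℝ (Fin n) |
          g ∈ (rho Z e).range ∧ ((g '' K) ∩ K).Nonempty}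
        ⊆ (rho Z e) '' {δ : Δ | ‖toE (cc Z e δ)‖ ≤ R + R} := by
      rintro g ⟨⟨δ, rfl⟩, y, ⟨x, hxK, hgx⟩, hyK⟩
      refine ⟨δ, ?_, rfl⟩
      have hx1 : toE (cc Z e δ) = rho Z e δ x - toE (NN Z e δ *ᵥ x) := by
        rw [rho_apply]
        apply WithLp.ofLp_injective 2
        show cc Z e δ = (cc Z e δ + NN Z e δ *ᵥ x) - NN Z e δ *ᵥ x
        abel
      have hmem : rho Z e δ x ∈ K := by rw [hgx]; exact hyK
      calc ‖toE (cc Z e δ)‖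
          = ‖rho Z e δ x - toE (NN Z e δ *ᵥ x)‖ := by rw [hx1]
      _ ≤ ‖rho Z e δ x‖ + ‖toE (NN Z e δ *ᵥ x)‖ := norm_sub_le _ _
      _ = ‖rho Z e δ x‖ + ‖x‖ := by rw [norm_mulVec_NN]
      _ ≤ R + R := add_le_add (hR _ hmem) (hR x hxK)
    exact Set.Finite.subset
      (Set.Finite.image _ (cc_ball_finite Z e (R + R))) hsub
  · -- compact quotient
    letI S := affOrbitSetoid (rho Z e).range
    set g : (Fin n → ℝ) → EuclideanSpace ℝ (Fin n) :=
      fun t => linE (PP Z e) ((EuclideanSpace.equiv (Fin n) ℝ).symm t) with hg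
    have hgcont : Continuous g :=
      (LinearMap.continuous_of_finiteDimensional (linE (PP Z e))).comp
        (EuclideanSpace.equiv (Fin n) ℝ).symm.continuous
    set K₀ : Set (EuclideanSpace ℝ (Fin n)) := g '' (Set.Icc (0 : Fin n → ℝ) 1) with hK₀def
    have hK₀ : IsCompact K₀ := isCompact_Icc.image hgcont
    have hcover : ∀ x : EuclideanSpace ℝ (Fin n), ∃ k ∈ K₀, S.r k x := by
      intro x
      set y : Fin n → ℝ := (PP Z e)⁻¹ *ᵥ x with hy
      set v : Fin n → ℤ := fun i => ⌊y i⌋ with hv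
      set t : Fin n → ℝ := fun i => Int.fract (y i) with ht
      have htmem : t ∈ Set.Icc (0 : Fin n → ℝ) 1 := by
        constructor
        · intro i
          exact Int.fract_nonneg (y i)
        · intro i
          exact (Int.fract_lt_one (y i)).le
      refine ⟨g t, ⟨t, htmem, rfl⟩, ?_⟩
      refine ⟨rho Z e ((ps Z e v : ↥Z) : Δ), ⟨_, rfl⟩, ?_⟩
      rw [rho_apply]
      apply WithLp.ofLp_injective 2
      show cc Z e ((ps Z e v : ↥Z) : Δ)
          + NN Z e ((ps Z e v : ↥Z) : Δ) *ᵥ (PP Z e *ᵥ t) = x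
      rw [NN_mem Z e (ps Z e v).2, Matrix.one_mulVec,
        cc_mem Z e (ps Z e v), ph_ps, ← Matrix.mulVec_add]
      have hsum : iv v + t = y := by
        funext i
        show (↑⌊y i⌋ : ℝ) + Int.fract (y i) = y i
        exact Int.floor_add_fract (y i)
      rw [hsum, hy, Matrix.mulVec_mulVec, PP_mul_inv, Matrix.one_mulVec]
    constructor
    have himg : Quotient.mk S '' K₀ = Set.univ := by
      apply Set.eq_univ_of_forall
      intro Q
      induction Q using Quotient.inductionOn with
      | h x =>
        obtain ⟨k, hk, hr⟩ := hcover x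
        exact ⟨k, hk, Quot.sound hr⟩
    rw [← himg]
    exact hK₀.image continuous_quotient_mk'

end BZaux

/-- **Burckhardt–Zassenhaus.**  Every finite effective extension `Δ` of `ℤ^n` is
isomorphic to a Euclidean crystallographic group: there is an injective homomorphism of
`Δ` into the affine group of `ℝ^n` whose image consists of isometries, is properly
discontinuous and has compact orbit space. -/
theorem finite_effective_extension_of_zn_is_euclidean_crystallographic
    (n : ℕ) {Δ : Type*} [Group Δ] (Z : Subgroup Δ) (hnorm : Z.Normal)
    (hfi : Z.FiniteIndex)
    (hiso : Nonempty (↥Z ≃* Multiplicative (Fin n → ℤ)))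
    (hc : Subgroup.centralizer (Z : Set Δ) = Z) :
    ∃ ρ : Δ →* (EuclideanSpace ℝ (Fin n) ≃ᵃ[ℝ] EuclideanSpace ℝ (Fin n)),
      Function.Injective ρ ∧ (∀ δ : Δ, Isometry (ρ δ)) ∧
        IsCrystallographic ρ.range := by
  classical
  obtain ⟨e⟩ := hiso
  haveI := hnorm
  haveI := hfi
  haveI : Finite (Δ ⧸ Z) := inferInstance
  letI : Fintype (Δ ⧸ Z) := Fintype.ofFinite _
  exact BZaux.main Z e hc

end
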